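/- Let I₀ be an infinite set and F a family of subsets of I₀ linearly ordered by inclusion, such that for every infinite chain F' ⊆ F, neither ⋃ F' nor ⋂ F' belongs to F' unless it is an endpoint of F'. If J ∈ I₀ and J ∉ F, then J ∈ Cl(F) (where J ∈ Cl(F) iff for every finite J₀ ⊆ I₀ infinitely many I ∈ F satisfy I ∩ J₀ = J ∩ J₀) if and only if J = ⋃ F' or J = ⋂ F' for some infinite subset F' ⊆ F. -/

import Mathlib

open Set

/-- A nonempty finite chain of sets has a greatest element. -/
lemma chain_fin_max {α : Type*} {F' : Set (Set α)} (hc : IsChain (· ⊆ ·) F')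
    (hf : F'.Finite) (hne : F'.Nonempty) : ∃ M ∈ F', ∀ I ∈ F', I ⊆ M := by
  obtain ⟨M, hM, hmax⟩ := Set.Finite.exists_maximalFor id F' hf hne
  refine ⟨M, hM, fun I hI => ?_⟩
  rcases eq_or_ne I M with rfl | hne'
  · exact subset_rfl
  · rcases hc.total hM hI with h | h
    · exact hmax hI h
    · exact h

/-- A nonempty finite chain of sets has a least element. -/
lemma chain_fin_min {α : Type*} {F' : Set (Set α)} (hc : IsChain (· ⊆ ·) F')
    (hf : F'.Finite) (hne : F'.Nonempty) : ∃ M ∈ F', ∀ I ∈ F', M ⊆ I := by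
  obtain ⟨M, hM, hmin⟩ := Set.Finite.exists_minimalFor id F' hf hne
  refine ⟨M, hM, fun I hI => ?_⟩
  rcases eq_or_ne I M with rfl | hne'
  · exact subset_rfl
  · rcases hc.total hM hI with h | h
    · exact h
    · exact hmin hI h

/-- In a nonempty chain, a finite set covered pointwise by members is contained in one member. -/
lemma chain_fin_sup {α : Type*} {F' : Set (Set α)} (hc : IsChain (· ⊆ ·) F')
    (hne : F'.Nonempty) {S : Set α} (hS : S.Finite)
    (hcov : ∀ x ∈ S, ∃ I ∈ F', x ∈ I) : ∃ I ∈ F', S ⊆ I := by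
  classical
  revert hcov
  refine Set.Finite.induction_on S hS ?_ ?_
  · intro _
    obtain ⟨I, hI⟩ := hne
    exact ⟨I, hI, empty_subset _⟩
  · intro a s _ _ ih hcov
    obtain ⟨I, hI, hSI⟩ := ih (fun x hx => hcov x (Or.inr hx))
    obtain ⟨I', hI', haI'⟩ := hcov a (Or.inl rfl)
    rcases hc.total hI hI' with h | h
    · exact ⟨I', hI', insert_subset haI' (hSI.trans h)⟩
    · exact ⟨I, hI, insert_subset (h haI') hSI⟩

/-- In a nonempty chain, a finite set avoided pointwise by members is avoided by one member. -/
lemma chain_fin_inf {α : Type*} {F' : Set (Set α)} (hc : IsChain (· ⊆ ·) F')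
    (hne : F'.Nonempty) {S : Set α} (hS : S.Finite)
    (hcov : ∀ x ∈ S, ∃ I ∈ F', x ∉ I) : ∃ I ∈ F', ∀ x ∈ S, x ∉ I := by
  classical
  revert hcov
  refine Set.Finite.induction_on S hS ?_ ?_
  · intro _
    obtain ⟨I, hI⟩ := hne
    exact ⟨I, hI, fun x hx => absurd hx (notMem_empty x)⟩
  · intro a s _ _ ih hcov
    obtain ⟨I, hI, hSI⟩ := ih (fun x hx => hcov x (Or.inr hx))
    obtain ⟨I', hI', haI'⟩ := hcov a (Or.inl rfl)
    rcases hc.total hI hI' with h | h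
    · refine ⟨I, hI, fun x hx => ?_⟩
      rcases hx with rfl | hx
      · exact fun hxI => haI' (h hxI)
      · exact hSI x hx
    · refine ⟨I', hI', fun x hx => ?_⟩
      rcases hx with rfl | hx
      · exact haI'
      · exact fun hxI => hSI x hx (h hxI)

/-- Combinatorial closure on families of index sets (Corollary 4.7 of the paper):
`J` is in the closure of `F` iff `J ∈ F` or for every finite `J₀` infinitely many
members of `F` agree with `J` on `J₀`. -/
def Cl {I₀ : Type*} (F : Set (Set I₀)) : Set (Set I₀) :=
  F ∪ {J | ∀ J₀ : Finset I₀, {I ∈ F | I ∩ ↑J₀ = J ∩ ↑J₀}.Infinite}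

/-- Corollary 4.7: for a chain `F` whose infinite subchains attain their union
resp. intersection only as endpoints, a set `J ∉ F` is in the closure iff it is
the union or the intersection of some infinite subfamily of `F`. -/
theorem mem_Cl_iff_limit {I₀ : Type*} [Infinite I₀]
    (F : Set (Set I₀)) (hchain : IsChain (· ⊆ ·) F)
    (hlim : ∀ F' ⊆ F, F'.Infinite →
      (⋃₀ F' ∈ F' → IsGreatest F' (⋃₀ F')) ∧ (⋂₀ F' ∈ F' → IsLeast F' (⋂₀ F')))
    (J : Set I₀) (hnot : J ∉ F) :
    J ∈ Cl F ↔ ∃ F' ⊆ F, F'.Infinite ∧ (J = ⋃₀ F' ∨ J = ⋂₀ F') := by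
  classical
  constructor
  · intro hJ
    have hA : ∀ J₀ : Finset I₀, {I ∈ F | I ∩ ↑J₀ = J ∩ ↑J₀}.Infinite := by
      rcases hJ with h | h
      · exact absurd h hnot
      · exact h
    -- no member of F crosses J
    have hcross : ∀ I ∈ F, I ⊆ J ∨ J ⊆ I := by
      intro I hI
      by_contra hcon
      push_neg at hcon
      obtain ⟨x, hxI, hxJ⟩ := not_subset.1 hcon.1
      obtain ⟨y, hyJ, hyI⟩ := not_subset.1 hcon.2
      obtain ⟨I', hI'F, heq⟩ := (hA {x, y}).nonempty
      have hx' : x ∉ I' := by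
        intro hx
        have : x ∈ J ∩ (↑({x, y} : Finset I₀) : Set I₀) := by
          rw [← heq]; exact ⟨hx, by simp⟩
        exact hxJ this.1
      have hy' : y ∈ I' := by
        have : y ∈ I' ∩ (↑({x, y} : Finset I₀) : Set I₀) := by
          rw [heq]; exact ⟨hyJ, by simp⟩
        exact this.1
      rcases hchain.total hI hI'F with h | h
      · exact hx' (h hxI)
      · exact hyI (h hy')
    set L : Set (Set I₀) := {I ∈ F | I ⊆ J} with hLdef
    set U : Set (Set I₀) := {I ∈ F | J ⊆ I} with hUdef
    by_cases hx : ∃ x ∈ J, ∀ I ∈ L, x ∉ I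
    · -- intersection case via U
      obtain ⟨x, hxJ, hxL⟩ := hx
      have hmemU : ∀ I ∈ F, x ∈ I → I ∈ U := by
        intro I hIF hxI
        rcases hcross I hIF with h | h
        · exact absurd hxI (hxL I ⟨hIF, h⟩)
        · exact ⟨hIF, h⟩
      have hUinf : U.Infinite := by
        refine (hA {x}).mono ?_
        rintro I ⟨hIF, heq⟩
        refine hmemU I hIF ?_
        have : x ∈ J ∩ (↑({x} : Finset I₀) : Set I₀) := ⟨hxJ, by simp⟩
        rw [← heq] at this
        exact this.1
      refine ⟨U, fun I hI => hI.1, hUinf, Or.inr ?_⟩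
      refine Subset.antisymm (subset_sInter fun I hI => hI.2) ?_
      intro y hy
      by_contra hyJ
      obtain ⟨I, hIF, heq⟩ := (hA {x, y}).nonempty
      have hxI : x ∈ I := by
        have : x ∈ J ∩ (↑({x, y} : Finset I₀) : Set I₀) := ⟨hxJ, by simp⟩
        rw [← heq] at this
        exact this.1
      have hIU : I ∈ U := hmemU I hIF hxI
      have hyI : y ∈ I := hy I hIU
      have : y ∈ J ∩ (↑({x, y} : Finset I₀) : Set I₀) := by
        rw [← heq]; exact ⟨hyI, by simp⟩
      exact hyJ this.1
    · -- J = ⋃₀ L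
      push_neg at hx
      have hJeq : J = ⋃₀ L := by
        refine Subset.antisymm ?_ (sUnion_subset fun I hI => hI.2)
        intro z hz
        obtain ⟨I, hIL, hzI⟩ := hx z hz
        exact ⟨I, hIL, hzI⟩
      by_cases hLinf : L.Infinite
      · exact ⟨L, fun I hI => hI.1, hLinf, Or.inl hJeq⟩
      · have hLfin : L.Finite := not_infinite.1 hLinf
        rcases L.eq_empty_or_nonempty with hLe | hLne
        · -- J = ∅, use F itself with intersection
          have hJ0 : J = ∅ := by rw [hJeq, hLe, sUnion_empty]
          have hFinf : F.Infinite := by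
            have := hA ∅
            simpa using this
          refine ⟨F, subset_rfl, hFinf, Or.inr ?_⟩
          refine Subset.antisymm (hJ0 ▸ empty_subset _) ?_
          intro y hy
          by_contra hyJ
          obtain ⟨I, hIF, heq⟩ := (hA {y}).nonempty
          have hyI : y ∈ I := hy I hIF
          have : y ∈ J ∩ (↑({y} : Finset I₀) : Set I₀) := by
            rw [← heq]; exact ⟨hyI, by simp⟩
          exact hyJ this.1
        · -- L finite nonempty: its max is J ∈ F, contradiction
          obtain ⟨M, hM, hmax⟩ := chain_fin_max (hchain.mono (fun I hI => hI.1)) hLfin hLne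
          have : J = M := by
            rw [hJeq]
            exact Subset.antisymm (sUnion_subset hmax) (subset_sUnion_of_mem hM)
          exact absurd (this ▸ hM.1) hnot
  · rintro ⟨F', hF'F, hinf, hcase⟩
    have hc' : IsChain (· ⊆ ·) F' := hchain.mono hF'F
    refine Or.inr fun J₀ => ?_
    rcases hcase with hJ' | hJ'
    · -- union case
      have hS : (J ∩ ↑J₀).Finite := J₀.finite_toSet.subset (inter_subset_right)
      have hcov : ∀ x ∈ J ∩ ↑J₀, ∃ I ∈ F', x ∈ I := by
        intro x hx
        have : x ∈ ⋃₀ F' := hJ' ▸ hx.1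
        exact this
      obtain ⟨Istar, hIstar, hsub⟩ := chain_fin_sup hc' hinf.nonempty hS hcov
      have hGinf : {I ∈ F' | Istar ⊆ I}.Infinite := by
        by_contra hfin
        have hGfin : {I ∈ F' | Istar ⊆ I}.Finite := not_infinite.1 hfin
        have hGne : {I ∈ F' | Istar ⊆ I}.Nonempty := ⟨Istar, hIstar, subset_rfl⟩
        obtain ⟨M, hM, hmax⟩ := chain_fin_max (hc'.mono (fun I hI => hI.1)) hGfin hGne
        have hall : ∀ I ∈ F', I ⊆ M := by
          intro I hI
          rcases hc'.total hI hIstar with h | h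
          · exact h.trans (hmax Istar ⟨hIstar, subset_rfl⟩)
          · exact hmax I ⟨hI, h⟩
        have : J = M := by
          rw [hJ']
          exact Subset.antisymm (sUnion_subset hall) (subset_sUnion_of_mem hM.1)
        exact hnot (this ▸ hF'F hM.1)
      refine hGinf.mono ?_
      rintro I ⟨hIF', hIsub⟩
      refine ⟨hF'F hIF', Subset.antisymm ?_ ?_⟩
      · intro z hz
        have hzJ : z ∈ J := by
          rw [hJ']
          exact ⟨I, hIF', hz.1⟩
        exact ⟨hzJ, hz.2⟩
      · intro z hz
        exact ⟨hIsub (hsub hz), hz.2⟩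
    · -- intersection case
      have hS : ((↑J₀ : Set I₀) \ J).Finite := J₀.finite_toSet.subset diff_subset
      have hcov : ∀ x ∈ (↑J₀ : Set I₀) \ J, ∃ I ∈ F', x ∉ I := by
        intro x hx
        by_contra hcon
        push_neg at hcon
        exact hx.2 (hJ' ▸ (fun I hI => hcon I hI : x ∈ ⋂₀ F'))
      obtain ⟨Istar, hIstar, havoid⟩ := chain_fin_inf hc' hinf.nonempty hS hcov
      have hGinf : {I ∈ F' | I ⊆ Istar}.Infinite := by
        by_contra hfin
        have hGfin : {I ∈ F' | I ⊆ Istar}.Finite := not_infinite.1 hfin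
        have hGne : {I ∈ F' | I ⊆ Istar}.Nonempty := ⟨Istar, hIstar, subset_rfl⟩
        obtain ⟨M, hM, hmin⟩ := chain_fin_min (hc'.mono (fun I hI => hI.1)) hGfin hGne
        have hall : ∀ I ∈ F', M ⊆ I := by
          intro I hI
          rcases hc'.total hI hIstar with h | h
          · exact hmin I ⟨hI, h⟩
          · exact (hmin Istar ⟨hIstar, subset_rfl⟩).trans h
        have : J = M := by
          rw [hJ']
          exact Subset.antisymm (sInter_subset_of_mem hM.1) (subset_sInter hall)
        exact hnot (this ▸ hF'F hM.1)
      refine hGinf.mono ?_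
      rintro I ⟨hIF', hIsub⟩
      refine ⟨hF'F hIF', Subset.antisymm ?_ ?_⟩
      · intro z hz
        by_contra hcon
        have hzJ : z ∉ J := fun h => hcon ⟨h, hz.2⟩
        exact havoid z ⟨hz.2, hzJ⟩ (hIsub hz.1)
      · intro z hz
        have : z ∈ ⋂₀ F' := hJ' ▸ hz.1
        exact ⟨this I hIF', hz.2⟩
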